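/- Let 1<q<∞ and φ ∈ G_q. Then there exists a constant C>0, depending only on n and q, such that for every measurable f:ℝⁿ→ℂ, ‖Mf‖_{M^φ_q} ≤ C‖f‖_{M^φ_q}, where M is the uncentered Hardy–Littlewood maximal operator over Euclidean balls. -/

import Mathlib

open MeasureTheory Set
open scoped ENNReal NNReal

/-- The generalized Morrey norm `‖f‖_{M^φ_q}` on `ℝⁿ` (cubes realized as closed balls
for the sup metric on `Fin n → ℝ`). -/
noncomputable def morreyNorm (n : ℕ) (q : ℝ) (φ : ℝ → ℝ)
    (f : (Fin n → ℝ) → ℂ) : ℝ≥0∞ :=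
  ⨆ (x : Fin n → ℝ) (r : ℝ) (_ : 0 < r),
    ENNReal.ofReal (φ r) *
      ((volume (Metric.closedBall x r))⁻¹ *
        ∫⁻ y in Metric.closedBall x r, (‖f y‖₊ : ℝ≥0∞) ^ q) ^ (1 / q)

/-- The generalized Morrey norm of an `ℝ≥0∞`-valued function. -/
noncomputable def morreyNormE (n : ℕ) (q : ℝ) (φ : ℝ → ℝ)
    (F : (Fin n → ℝ) → ℝ≥0∞) : ℝ≥0∞ :=
  ⨆ (x : Fin n → ℝ) (r : ℝ) (_ : 0 < r),
    ENNReal.ofReal (φ r) *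
      ((volume (Metric.closedBall x r))⁻¹ *
        ∫⁻ y in Metric.closedBall x r, (F y) ^ q) ^ (1 / q)

/-- The class `G_q`: nondecreasing functions `φ : (0,∞) → (0,∞)` such that
`t ↦ t^{-n/q} φ(t)` is nonincreasing on `(0,∞)`. -/
def IsGq (n : ℕ) (q : ℝ) (φ : ℝ → ℝ) : Prop :=
  (∀ t, 0 < t → 0 < φ t) ∧
  (∀ s t, 0 < s → s ≤ t → φ s ≤ φ t) ∧
  (∀ s t, 0 < s → s ≤ t → t ^ (-((n : ℝ) / q)) * φ t ≤ s ^ (-((n : ℝ) / q)) * φ s)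

/-- The (open) Euclidean ball in `Fin n → ℝ`. -/
def euclBall (n : ℕ) (c : Fin n → ℝ) (r : ℝ) : Set (Fin n → ℝ) :=
  {y | Real.sqrt (∑ j, (y j - c j) ^ 2) < r}

/-- The uncentered Hardy--Littlewood maximal operator over Euclidean balls. -/
noncomputable def hlMaximal (n : ℕ) (f : (Fin n → ℝ) → ℂ)
    (x : Fin n → ℝ) : ℝ≥0∞ :=
  ⨆ (c : Fin n → ℝ) (r : ℝ) (_ : 0 < r) (_ : x ∈ euclBall n c r),
    (volume (euclBall n c r))⁻¹ * ∫⁻ y in euclBall n c r, (‖f y‖₊ : ℝ≥0∞)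

namespace MorreyAux


variable {n : ℕ}

/-- Euclidean distance on `Fin n → ℝ`. -/
noncomputable def dE (x y : Fin n → ℝ) : ℝ := Real.sqrt (∑ j, (x j - y j) ^ 2)

lemma dE_eq_dist (x y : Fin n → ℝ) :
    dE x y = dist ((WithLp.equiv 2 (Fin n → ℝ)).symm x) ((WithLp.equiv 2 (Fin n → ℝ)).symm y) := by
  rw [EuclideanSpace.dist_eq]
  simp [dE, Real.dist_eq, sq_abs]

lemma dE_nonneg (x y : Fin n → ℝ) : 0 ≤ dE x y := Real.sqrt_nonneg _

lemma dE_comm (x y : Fin n → ℝ) : dE x y = dE y x := by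
  rw [dE_eq_dist, dE_eq_dist, dist_comm]

lemma dE_triangle (x y z : Fin n → ℝ) : dE x z ≤ dE x y + dE y z := by
  rw [dE_eq_dist, dE_eq_dist, dE_eq_dist]; exact dist_triangle _ _ _

lemma dist_le_dE (x y : Fin n → ℝ) : dist x y ≤ dE x y := by
  rw [dist_pi_le_iff (dE_nonneg x y)]
  intro i
  rw [Real.dist_eq, ← Real.sqrt_sq_eq_abs]
  exact Real.sqrt_le_sqrt (Finset.single_le_sum (f := fun j => (x j - y j) ^ 2)
    (fun j _ => sq_nonneg _) (Finset.mem_univ i))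

lemma dE_le_sqrt_mul_dist (x y : Fin n → ℝ) : dE x y ≤ Real.sqrt n * dist x y := by
  have h : dE x y ≤ Real.sqrt (∑ _j : Fin n, (dist x y) ^ 2) := by
    apply Real.sqrt_le_sqrt
    apply Finset.sum_le_sum
    intro j _
    have := dist_le_pi_dist x y j
    rw [Real.dist_eq] at this
    calc (x j - y j) ^ 2 = |x j - y j| ^ 2 := (sq_abs _).symm
    _ ≤ (dist x y) ^ 2 := by
        apply pow_le_pow_left₀ (abs_nonneg _) this
  calc dE x y ≤ Real.sqrt (∑ _j : Fin n, (dist x y) ^ 2) := h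
  _ = Real.sqrt n * dist x y := by
      rw [Finset.sum_const, Finset.card_univ, Fintype.card_fin, nsmul_eq_mul,
        Real.sqrt_mul (by positivity), Real.sqrt_sq dist_nonneg]

lemma mem_euclBall {c y : Fin n → ℝ} {r : ℝ} : y ∈ euclBall n c r ↔ dE y c < r := Iff.rfl

lemma isOpen_euclBall (c : Fin n → ℝ) (r : ℝ) : IsOpen (euclBall n c r) := by
  have : Continuous fun y : Fin n → ℝ => dE y c := by
    apply Real.continuous_sqrt.comp
    exact continuous_finset_sum _ fun j _ => by fun_prop
  exact isOpen_lt this continuous_const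

lemma measurableSet_euclBall (c : Fin n → ℝ) (r : ℝ) : MeasurableSet (euclBall n c r) :=
  (isOpen_euclBall c r).measurableSet

lemma euclBall_subset_closedBall (c : Fin n → ℝ) (r : ℝ) :
    euclBall n c r ⊆ Metric.closedBall c r :=
  fun y hy => Metric.mem_closedBall.2 <| ((dist_le_dE y c).trans_lt hy).le

lemma ball_subset_euclBall (hn : 0 < n) (c : Fin n → ℝ) {r : ℝ} (hr : 0 < r) :
    Metric.ball c (r / Real.sqrt n) ⊆ euclBall n c r := by
  intro y hy
  rw [Metric.mem_ball] at hy
  rw [mem_euclBall]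
  have hs : (0:ℝ) < Real.sqrt n := Real.sqrt_pos.2 (by exact_mod_cast hn)
  calc dE y c ≤ Real.sqrt n * dist y c := dE_le_sqrt_mul_dist y c
  _ < Real.sqrt n * (r / Real.sqrt n) := by
      apply mul_lt_mul_of_pos_left hy hs
  _ = r := by field_simp

lemma mem_euclBall_self {c : Fin n → ℝ} {r : ℝ} (hr : 0 < r) : c ∈ euclBall n c r := by
  rw [mem_euclBall]
  simp [dE, hr]

lemma euclBall_subset_of_inter {c₁ c₂ : Fin n → ℝ} {r₁ r₂ : ℝ}
    (h : (euclBall n c₁ r₁ ∩ euclBall n c₂ r₂).Nonempty) (hr : r₁ ≤ 2 * r₂) :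
    euclBall n c₁ r₁ ⊆ euclBall n c₂ (5 * r₂) := by
  obtain ⟨z, hz₁, hz₂⟩ := h
  rw [mem_euclBall] at hz₁ hz₂
  intro y hy
  rw [mem_euclBall] at hy ⊢
  have h1 : dE y c₂ ≤ dE y c₁ + dE c₁ z + dE z c₂ := by
    calc dE y c₂ ≤ dE y c₁ + dE c₁ c₂ := dE_triangle _ _ _
    _ ≤ dE y c₁ + (dE c₁ z + dE z c₂) := by
        have := dE_triangle c₁ z c₂; linarith
    _ = dE y c₁ + dE c₁ z + dE z c₂ := by ring
  have h2 : dE c₁ z < r₁ := by rw [dE_comm]; exact hz₁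
  linarith

lemma volume_euclBall_le (c : Fin n → ℝ) {r : ℝ} (hr : 0 ≤ r) :
    volume (euclBall n c r) ≤ ENNReal.ofReal ((2 * r) ^ n) := by
  calc volume (euclBall n c r) ≤ volume (Metric.closedBall c r) :=
        measure_mono (euclBall_subset_closedBall c r)
  _ = ENNReal.ofReal ((2 * r) ^ Fintype.card (Fin n)) := Real.volume_pi_closedBall c hr
  _ = ENNReal.ofReal ((2 * r) ^ n) := by rw [Fintype.card_fin]

lemma le_volume_euclBall (hn : 0 < n) (c : Fin n → ℝ) {r : ℝ} (hr : 0 < r) :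
    ENNReal.ofReal ((2 * (r / Real.sqrt n)) ^ n) ≤ volume (euclBall n c r) := by
  calc ENNReal.ofReal ((2 * (r / Real.sqrt n)) ^ n)
      = ENNReal.ofReal ((2 * (r / Real.sqrt n)) ^ Fintype.card (Fin n)) := by
        rw [Fintype.card_fin]
  _ = volume (Metric.ball c (r / Real.sqrt n)) := by
        rw [Real.volume_pi_ball]
        positivity
  _ ≤ volume (euclBall n c r) := measure_mono (ball_subset_euclBall hn c hr)

lemma volume_euclBall_pos (hn : 0 < n) (c : Fin n → ℝ) {r : ℝ} (hr : 0 < r) :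
    0 < volume (euclBall n c r) := by
  refine lt_of_lt_of_le ?_ (le_volume_euclBall hn c hr)
  rw [ENNReal.ofReal_pos]
  have : (0:ℝ) < Real.sqrt n := Real.sqrt_pos.2 (by exact_mod_cast hn)
  positivity

lemma volume_euclBall_lt_top (c : Fin n → ℝ) (r : ℝ) :
    volume (euclBall n c r) < ∞ := by
  rcases le_or_gt r 0 with h | h
  · have : euclBall n c r = ∅ := by
      ext y; simp only [mem_euclBall, mem_empty_iff_false, iff_false, not_lt]
      exact h.trans (dE_nonneg _ _)
    simp [this]
  · exact lt_of_le_of_lt (volume_euclBall_le c h.le) ENNReal.ofReal_lt_top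





lemma le_hlMaximal (f : (Fin n → ℝ) → ℂ) {x c : Fin n → ℝ} {r : ℝ} (hr : 0 < r)
    (hx : x ∈ euclBall n c r) :
    (volume (euclBall n c r))⁻¹ * ∫⁻ y in euclBall n c r, (‖f y‖₊ : ℝ≥0∞) ≤
      hlMaximal n f x := by
  refine le_trans ?_ (le_iSup _ c)
  refine le_trans ?_ (le_iSup _ r)
  refine le_trans ?_ (le_iSup _ hr)
  exact le_iSup (fun _ : x ∈ euclBall n c r =>
    (volume (euclBall n c r))⁻¹ * ∫⁻ y in euclBall n c r, (‖f y‖₊ : ℝ≥0∞)) hx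

lemma exists_ball_of_lt_hlMaximal {f : (Fin n → ℝ) → ℂ} {x : Fin n → ℝ} {l : ℝ≥0∞}
    (h : l < hlMaximal n f x) :
    ∃ c r, 0 < r ∧ x ∈ euclBall n c r ∧
      l < (volume (euclBall n c r))⁻¹ * ∫⁻ y in euclBall n c r, (‖f y‖₊ : ℝ≥0∞) := by
  rw [hlMaximal] at h
  rw [lt_iSup_iff] at h
  obtain ⟨c, h⟩ := h
  rw [lt_iSup_iff] at h
  obtain ⟨r, h⟩ := h
  rw [lt_iSup_iff] at h
  obtain ⟨hr, h⟩ := h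
  rw [lt_iSup_iff] at h
  obtain ⟨hx, h⟩ := h
  exact ⟨c, r, hr, hx, h⟩

lemma hlMaximal_le_of_forall {f : (Fin n → ℝ) → ℂ} {x : Fin n → ℝ} {l : ℝ≥0∞}
    (h : ∀ c r, 0 < r → x ∈ euclBall n c r →
      (volume (euclBall n c r))⁻¹ * ∫⁻ y in euclBall n c r, (‖f y‖₊ : ℝ≥0∞) ≤ l) :
    hlMaximal n f x ≤ l :=
  iSup_le fun c => iSup_le fun r => iSup_le fun hr => iSup_le fun hx => h c r hr hx

lemma isOpen_hlMaximal_gt (f : (Fin n → ℝ) → ℂ) (l : ℝ≥0∞) :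
    IsOpen {x | l < hlMaximal n f x} := by
  rw [isOpen_iff_forall_mem_open]
  intro x hx
  obtain ⟨c, r, hr, hxB, hl⟩ := exists_ball_of_lt_hlMaximal hx
  refine ⟨euclBall n c r, fun y hy => ?_, ?_, hxB⟩
  · exact lt_of_lt_of_le hl (le_hlMaximal f hr hy)
  · -- openness
    have : Continuous fun y : Fin n → ℝ => Real.sqrt (∑ j, (y j - c j) ^ 2) := by
      apply Real.continuous_sqrt.comp
      exact continuous_finset_sum _ fun j _ => by fun_prop
    exact isOpen_lt this continuous_const

lemma measurable_hlMaximal (f : (Fin n → ℝ) → ℂ) : Measurable (hlMaximal n f) := by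
  apply measurable_of_Ioi
  intro a
  exact (isOpen_hlMaximal_gt f a).measurableSet





-- placeholders from p1/p2 (assume available)
lemma sqrt_n_pos (hn : 0 < n) : (0:ℝ) < Real.sqrt n := Real.sqrt_pos.2 (by exact_mod_cast hn)

/-- From `L < vol⁻¹ * ∫`, conclude `vol * L ≤ ∫`. -/
lemma mul_le_of_lt_inv_mul {v L I : ℝ≥0∞} (hv0 : v ≠ 0) (hvt : v ≠ ∞)
    (h : L < v⁻¹ * I) : v * L ≤ I := by
  calc v * L ≤ v * (v⁻¹ * I) := by
        exact mul_le_mul_right h.le v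
  _ = (v * v⁻¹) * I := by ring
  _ = I := by rw [ENNReal.mul_inv_cancel hv0 hvt, one_mul]

/-- The weak (1,1) inequality for the uncentered maximal function over Euclidean
balls, with constant `(5 √n)^n`. -/
lemma weak11 (hn : 0 < n) (f : (Fin n → ℝ) → ℂ) {l : ℝ} (hl : 0 < l) :
    ENNReal.ofReal l * volume {x | ENNReal.ofReal l < hlMaximal n f x} ≤
      ENNReal.ofReal ((5 * Real.sqrt n) ^ n) * ∫⁻ y, (‖f y‖₊ : ℝ≥0∞) := by
  set I := ∫⁻ y, (‖f y‖₊ : ℝ≥0∞) with hI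
  rcases eq_or_ne I ∞ with hItop | hItop
  · rw [hItop, ENNReal.mul_top]
    · exact le_top
    · simp only [ne_eq, ENNReal.ofReal_eq_zero, not_le]
      have := sqrt_n_pos hn
      positivity
  set L := ENNReal.ofReal l with hL
  have hL0 : L ≠ 0 := by simp [hL, hl]
  have hLt : L ≠ ∞ := ENNReal.ofReal_ne_top
  -- the family of balls with large average
  set B : (Fin n → ℝ) × ℝ → Set (Fin n → ℝ) := fun p => euclBall n p.1 p.2 with hB
  set t : Set ((Fin n → ℝ) × ℝ) :=
    {p | 0 < p.2 ∧ L < (volume (B p))⁻¹ * ∫⁻ y in B p, (‖f y‖₊ : ℝ≥0∞)} with ht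
  have key : ∀ p ∈ t, volume (B p) * L ≤ ∫⁻ y in B p, (‖f y‖₊ : ℝ≥0∞) := by
    intro p hp
    exact mul_le_of_lt_inv_mul (volume_euclBall_pos hn p.1 hp.1).ne'
      (volume_euclBall_lt_top p.1 p.2).ne hp.2
  -- radius bound
  have hR : ∀ p ∈ t, p.2 ≤ Real.sqrt n / 2 * (I.toReal / l) ^ (1 / (n:ℝ)) := by
    intro p hp
    have hρ : 0 < p.2 := hp.1
    have hsn := sqrt_n_pos hn
    have h1 : ENNReal.ofReal ((2 * (p.2 / Real.sqrt n)) ^ n) * L ≤ I := by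
      calc ENNReal.ofReal ((2 * (p.2 / Real.sqrt n)) ^ n) * L ≤ volume (B p) * L :=
            mul_le_mul_left (le_volume_euclBall hn p.1 hp.1) L
      _ ≤ ∫⁻ y in B p, (‖f y‖₊ : ℝ≥0∞) := key p hp
      _ ≤ I := setLIntegral_le_lintegral _ _
    have ha : (0:ℝ) ≤ 2 * (p.2 / Real.sqrt n) := by positivity
    rw [hL, ← ENNReal.ofReal_mul (by positivity)] at h1
    have h2 : (2 * (p.2 / Real.sqrt n)) ^ n * l ≤ I.toReal := by
      have := ENNReal.toReal_mono hItop h1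
      rwa [ENNReal.toReal_ofReal (by positivity)] at this
    have h3 : (2 * (p.2 / Real.sqrt n)) ^ n ≤ I.toReal / l := by
      rw [le_div_iff₀ hl]; exact h2
    have h4 : 2 * (p.2 / Real.sqrt n) ≤ (I.toReal / l) ^ (1 / (n:ℝ)) := by
      have hnn : ((n:ℝ)) ≠ 0 := by exact_mod_cast hn.ne'
      have : 2 * (p.2 / Real.sqrt n) =
          ((2 * (p.2 / Real.sqrt n)) ^ n) ^ (1 / (n:ℝ)) := by
        rw [← Real.rpow_natCast (2 * (p.2 / Real.sqrt n)) n, ← Real.rpow_mul ha,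
          mul_one_div, div_self hnn, Real.rpow_one]
      rw [this]
      exact Real.rpow_le_rpow (by positivity) h3 (by positivity)
    calc p.2 = Real.sqrt n / 2 * (2 * (p.2 / Real.sqrt n)) := by field_simp
    _ ≤ Real.sqrt n / 2 * (I.toReal / l) ^ (1 / (n:ℝ)) := by
        apply mul_le_mul_of_nonneg_left h4 (by positivity)
  -- Vitali
  obtain ⟨u, hut, hdisj, hcov⟩ :=
    Vitali.exists_disjoint_subfamily_covering_enlargement B t (fun p => p.2) 2 one_lt_two
    (fun p hp => hp.1.le) _ hR (fun p hp => ⟨p.1, mem_euclBall_self hp.1⟩)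
  -- enlarged balls cover the superlevel set
  have hcover : {x | L < hlMaximal n f x} ⊆ ⋃ b ∈ u, euclBall n b.1 (5 * b.2) := by
    intro x hx
    obtain ⟨c, r, hr, hxB, hlt⟩ := exists_ball_of_lt_hlMaximal hx
    have hat : ((c, r) : (Fin n → ℝ) × ℝ) ∈ t := ⟨hr, hlt⟩
    obtain ⟨b, hbu, hint, hle⟩ := hcov _ hat
    have hsub := euclBall_subset_of_inter (c₁ := c) (c₂ := b.1) (r₁ := r) (r₂ := b.2)
      hint hle
    exact mem_biUnion hbu (hsub hxB)
  -- Lindelöf: countable subfamily with the same union of enlarged balls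
  obtain ⟨T, hTcount, hTunion⟩ := TopologicalSpace.isOpen_iUnion_countable
    (ι := u) (fun b => euclBall n b.1.1 (5 * b.1.2))
    (fun b => isOpen_euclBall _ _)
  have : Countable T := hTcount.to_subtype
  have hmeas : volume {x | L < hlMaximal n f x} ≤
      ENNReal.ofReal ((5 * Real.sqrt n) ^ n) * ∑' b : T, volume (B (b.1 : (Fin n → ℝ) × ℝ)) := by
    have step1 : volume {x | L < hlMaximal n f x} ≤
        ∑' b : T, volume (euclBall n (b.1.1 : (Fin n → ℝ) × ℝ).1 (5 * (b.1.1 : (Fin n → ℝ) × ℝ).2)) := by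
      refine le_trans (measure_mono ?_) (measure_iUnion_le _)
      intro x hx
      have : x ∈ ⋃ b : u, euclBall n b.1.1 (5 * b.1.2) := by
        obtain ⟨b, hbu, hxb⟩ := mem_iUnion₂.1 (hcover hx)
        exact mem_iUnion.2 ⟨⟨b, hbu⟩, hxb⟩
      rw [← hTunion] at this
      obtain ⟨b, hbT, hxb⟩ := mem_iUnion₂.1 this
      exact mem_iUnion.2 ⟨⟨b, hbT⟩, hxb⟩
    refine le_trans step1 ?_
    rw [← ENNReal.tsum_mul_left]
    apply ENNReal.tsum_le_tsum
    intro b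
    set p := (b.1.1 : (Fin n → ℝ) × ℝ) with hp
    have hpt : p ∈ t := hut b.1.2
    have hρ : 0 < p.2 := hpt.1
    have hsn := sqrt_n_pos hn
    calc volume (euclBall n p.1 (5 * p.2)) ≤ ENNReal.ofReal ((2 * (5 * p.2)) ^ n) :=
          volume_euclBall_le p.1 (by positivity)
    _ = ENNReal.ofReal ((5 * Real.sqrt n) ^ n * (2 * (p.2 / Real.sqrt n)) ^ n) := by
        congr 1
        rw [← mul_pow]
        congr 1
        field_simp
    _ = ENNReal.ofReal ((5 * Real.sqrt n) ^ n) * ENNReal.ofReal ((2 * (p.2 / Real.sqrt n)) ^ n) := by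
        rw [ENNReal.ofReal_mul (by positivity)]
    _ ≤ ENNReal.ofReal ((5 * Real.sqrt n) ^ n) * volume (B p) :=
        mul_le_mul_right (le_volume_euclBall hn p.1 hρ) _
  -- sum of integrals over disjoint balls
  have hdisjT : Pairwise (Function.onFun Disjoint fun b : T => B (b.1 : (Fin n → ℝ) × ℝ)) := by
    intro b₁ b₂ hne
    have h1 : (b₁.1.1 : (Fin n → ℝ) × ℝ) ∈ u := b₁.1.2
    have h2 : (b₂.1.1 : (Fin n → ℝ) × ℝ) ∈ u := b₂.1.2
    apply hdisj h1 h2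
    intro h
    apply hne
    ext1
    ext1
    exact h
  have hsum : ∑' b : T, ∫⁻ y in B (b.1 : (Fin n → ℝ) × ℝ), (‖f y‖₊ : ℝ≥0∞) ≤ I := by
    rw [← lintegral_iUnion (fun b => measurableSet_euclBall _ _) hdisjT]
    exact setLIntegral_le_lintegral _ _
  calc L * volume {x | L < hlMaximal n f x}
      ≤ L * (ENNReal.ofReal ((5 * Real.sqrt n) ^ n) * ∑' b : T, volume (B (b.1 : (Fin n → ℝ) × ℝ))) :=
        mul_le_mul_right hmeas L
  _ = ENNReal.ofReal ((5 * Real.sqrt n) ^ n) * ∑' b : T, volume (B (b.1 : (Fin n → ℝ) × ℝ)) * L := by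
      rw [ENNReal.tsum_mul_right]
      ring
  _ ≤ ENNReal.ofReal ((5 * Real.sqrt n) ^ n) * ∑' b : T, ∫⁻ y in B (b.1 : (Fin n → ℝ) × ℝ), (‖f y‖₊ : ℝ≥0∞) := by
      apply mul_le_mul_right
      exact ENNReal.tsum_le_tsum fun b => key _ (hut b.1.2)
  _ ≤ ENNReal.ofReal ((5 * Real.sqrt n) ^ n) * I := mul_le_mul_right hsum _




/-- `∫_{0<t<a'} t^p dt = a'^{p+1}/(p+1)` in `ℝ≥0∞` form, with the region encoded by
an indicator of `{t | ofReal t < a}`. -/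
lemma ptwise_finite {p : ℝ} (hp : -1 < p) (a : ℝ≥0∞) (ha : a ≠ ∞) :
    ∫⁻ t in Ioi (0:ℝ),
      ({t : ℝ | ENNReal.ofReal t < a}.indicator (fun t => ENNReal.ofReal (t ^ p))) t
      = ENNReal.ofReal (a.toReal ^ (p+1) / (p+1)) := by
  have hmeas : MeasurableSet {t : ℝ | ENNReal.ofReal t < a} :=
    measurableSet_lt (ENNReal.measurable_ofReal) measurable_const
  rw [lintegral_indicator hmeas, Measure.restrict_restrict hmeas]
  have hset : {t : ℝ | ENNReal.ofReal t < a} ∩ Ioi 0 = Ioo 0 a.toReal := by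
    ext t
    simp only [mem_inter_iff, mem_setOf_eq, mem_Ioi, mem_Ioo]
    constructor
    · rintro ⟨h1, h2⟩
      exact ⟨h2, (ENNReal.ofReal_lt_iff_lt_toReal (le_of_lt h2) ha).1 h1⟩
    · rintro ⟨h1, h2⟩
      exact ⟨(ENNReal.ofReal_lt_iff_lt_toReal h1.le ha).2 h2, h1⟩
  rw [hset]
  set a' := a.toReal with ha'
  have ha'0 : 0 ≤ a' := ENNReal.toReal_nonneg
  have hint : IntervalIntegrable (fun t : ℝ => t ^ p) volume 0 a' :=
    intervalIntegral.intervalIntegrable_rpow' hp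
  have hIoo : IntegrableOn (fun t : ℝ => t ^ p) (Ioo 0 a') volume :=
    (hint.1).mono_set Ioo_subset_Ioc_self
  rw [← ofReal_integral_eq_lintegral_ofReal hIoo
    ((ae_restrict_iff' measurableSet_Ioo).2 (Filter.Eventually.of_forall
      fun t ht => Real.rpow_nonneg ht.1.le p))]
  congr 1
  rw [← integral_Ioc_eq_integral_Ioo, ← intervalIntegral.integral_of_le ha'0]
  rw [integral_rpow (Or.inl hp)]
  rw [Real.zero_rpow (by linarith)]
  ring

lemma ptwise_top {p : ℝ} (hp : 0 ≤ p) :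
    ∫⁻ t in Ioi (0:ℝ), ENNReal.ofReal (t ^ p) = ∞ := by
  have h1 : ∫⁻ t in Ioi (1:ℝ), (1:ℝ≥0∞) ≤ ∫⁻ t in Ioi (1:ℝ), ENNReal.ofReal (t ^ p) := by
    apply setLIntegral_mono (by fun_prop)
    intro t ht
    rw [show (1:ℝ≥0∞) = ENNReal.ofReal 1 by simp]
    exact ENNReal.ofReal_le_ofReal (Real.one_le_rpow (le_of_lt ht) hp)
  have h2 : ∫⁻ t in Ioi (1:ℝ), (1:ℝ≥0∞) = ∞ := by
    rw [setLIntegral_one, Real.volume_Ioi]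
  have h3 : ∫⁻ t in Ioi (1:ℝ), ENNReal.ofReal (t ^ p) ≤
      ∫⁻ t in Ioi (0:ℝ), ENNReal.ofReal (t ^ p) :=
    lintegral_mono_set (Ioi_subset_Ioi zero_le_one)
  rw [eq_top_iff]
  exact le_trans (le_trans (h2 ▸ le_refl _) (h1.trans h3)) (le_refl _)

/-- Pointwise layer-cake identity in `ℝ≥0∞`: for `1 < q`,
`a ^ q = ∫_{t>0} 1_{ofReal t < a} q t^{q-1} dt`. -/
lemma ptwise_rpow {q : ℝ} (hq : 1 < q) (a : ℝ≥0∞) :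
    ∫⁻ t in Ioi (0:ℝ),
      ({t : ℝ | ENNReal.ofReal t < a}.indicator (fun t => ENNReal.ofReal (q * t ^ (q-1)))) t
      = a ^ q := by
  have hq0 : (0:ℝ) ≤ q := by linarith
  have heq : ∀ t : ℝ,
      ({t : ℝ | ENNReal.ofReal t < a}.indicator (fun t => ENNReal.ofReal (q * t ^ (q-1)))) t =
      ENNReal.ofReal q *
        ({t : ℝ | ENNReal.ofReal t < a}.indicator (fun t => ENNReal.ofReal (t ^ (q-1)))) t := by
    intro t
    rw [← Set.indicator_const_mul]
    congr 1
    ext s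
    rw [ENNReal.ofReal_mul hq0]
  simp_rw [heq]
  rw [lintegral_const_mul' _ _ ENNReal.ofReal_ne_top]
  rcases eq_or_ne a ∞ with rfl | ha
  · have huniv : {t : ℝ | ENNReal.ofReal t < ∞} = univ := by
      ext t; simp [ENNReal.ofReal_lt_top]
    rw [huniv]
    simp only [indicator_univ]
    rw [ptwise_top (by linarith : (0:ℝ) ≤ q - 1)]
    rw [ENNReal.mul_top (by simp; linarith)]
    rw [ENNReal.top_rpow_of_pos (by linarith)]
  · rw [ptwise_finite (by linarith : (-1:ℝ) < q - 1) a ha]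
    have : q - 1 + 1 = q := by ring
    rw [this]
    rw [← ENNReal.ofReal_mul hq0]
    have hq1 : q - 1 + 1 = q := by ring
    have : q * (a.toReal ^ q / q) = a.toReal ^ q := by
      field_simp
    rw [this, ← ENNReal.ofReal_rpow_of_nonneg ENNReal.toReal_nonneg hq0,
      ENNReal.ofReal_toReal ha]

/-- Layer-cake formula for `ℝ≥0∞`-valued functions. -/
lemma layercake {α : Type*} [MeasurableSpace α] (μ : Measure α) [SigmaFinite μ]
    {g : α → ℝ≥0∞} (hg : Measurable g) {q : ℝ} (hq : 1 < q) :
    ∫⁻ x, g x ^ q ∂μ =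
      ∫⁻ t in Ioi (0:ℝ), ENNReal.ofReal (q * t ^ (q-1)) * μ {x | ENNReal.ofReal t < g x} := by
  have step1 : ∫⁻ x, g x ^ q ∂μ = ∫⁻ x, (∫⁻ t in Ioi (0:ℝ),
      ({t : ℝ | ENNReal.ofReal t < g x}.indicator
        (fun t => ENNReal.ofReal (q * t ^ (q-1)))) t) ∂μ := by
    apply lintegral_congr
    intro x
    rw [ptwise_rpow hq]
  rw [step1]
  have hS : MeasurableSet {p : α × ℝ | ENNReal.ofReal p.2 < g p.1} :=
    measurableSet_lt (ENNReal.measurable_ofReal.comp measurable_snd) (hg.comp measurable_fst)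
  have hF : Measurable (Function.uncurry fun x t =>
      ({t : ℝ | ENNReal.ofReal t < g x}.indicator
        (fun t => ENNReal.ofReal (q * t ^ (q-1)))) t) := by
    have : (Function.uncurry fun x t =>
        ({t : ℝ | ENNReal.ofReal t < g x}.indicator
          (fun t => ENNReal.ofReal (q * t ^ (q-1)))) t) =
        {p : α × ℝ | ENNReal.ofReal p.2 < g p.1}.indicator
          (fun p => ENNReal.ofReal (q * p.2 ^ (q-1))) := by
      ext p
      rcases p with ⟨x, t⟩
      simp only [Function.uncurry, Set.indicator, mem_setOf_eq]
    rw [this]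
    exact Measurable.indicator (by fun_prop) hS
  rw [lintegral_lintegral_swap hF.aemeasurable]
  apply lintegral_congr
  intro t
  have : (fun x => ({s : ℝ | ENNReal.ofReal s < g x}.indicator
      (fun s => ENNReal.ofReal (q * s ^ (q-1)))) t) =
      (fun x => {x : α | ENNReal.ofReal t < g x}.indicator
        (fun _ => ENNReal.ofReal (q * t ^ (q-1))) x) := by
    ext x
    simp only [Set.indicator, mem_setOf_eq]
  have hmeas2 : MeasurableSet {x : α | ENNReal.ofReal t < g x} :=
    measurableSet_lt measurable_const hg
  rw [this, lintegral_indicator hmeas2, setLIntegral_const]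





lemma hlMaximal_le_add (hn : 0 < n) (f g : (Fin n → ℝ) → ℂ) (c : ℝ≥0∞)
    (h : ∀ y, (‖f y‖₊ : ℝ≥0∞) ≤ (‖g y‖₊ : ℝ≥0∞) + c) (x : Fin n → ℝ) :
    hlMaximal n f x ≤ hlMaximal n g x + c := by
  apply hlMaximal_le_of_forall
  intro c₀ r hr hx
  set B := euclBall n c₀ r
  have hv0 : volume B ≠ 0 := (volume_euclBall_pos hn c₀ hr).ne'
  have hvt : volume B ≠ ∞ := (volume_euclBall_lt_top c₀ r).ne
  calc (volume B)⁻¹ * ∫⁻ y in B, (‖f y‖₊ : ℝ≥0∞)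
      ≤ (volume B)⁻¹ * ∫⁻ y in B, ((‖g y‖₊ : ℝ≥0∞) + c) :=
        mul_le_mul_right (lintegral_mono fun y => h y) _
  _ = (volume B)⁻¹ * ((∫⁻ y in B, (‖g y‖₊ : ℝ≥0∞)) + c * volume B) := by
        rw [lintegral_add_right _ measurable_const, setLIntegral_const]
  _ = (volume B)⁻¹ * (∫⁻ y in B, (‖g y‖₊ : ℝ≥0∞)) + (volume B)⁻¹ * (c * volume B) :=
        mul_add _ _ _
  _ ≤ hlMaximal n g x + c := by
        apply add_le_add (le_hlMaximal g hr hx)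
        rw [mul_comm c, ← mul_assoc, ENNReal.inv_mul_cancel hv0 hvt, one_mul]

lemma two_mul_ofReal_half (t : ℝ) : 2 * ENNReal.ofReal (t/2) = ENNReal.ofReal t := by
  rcases le_or_gt t 0 with ht | ht
  · rw [ENNReal.ofReal_of_nonpos ht, ENNReal.ofReal_of_nonpos (by linarith), mul_zero]
  · rw [show (2:ℝ≥0∞) = ENNReal.ofReal 2 by simp, ← ENNReal.ofReal_mul (by norm_num)]
    congr 1
    ring

lemma mul_rpow_sub_one {q : ℝ} (hq : 1 < q) (x : ℝ≥0∞) (hx : x ≠ ∞) :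
    x ^ (q - 1) * x = x ^ q := by
  rcases eq_or_ne x 0 with rfl | hx0
  · rw [ENNReal.zero_rpow_of_pos (by linarith), ENNReal.zero_rpow_of_pos (by linarith), zero_mul]
  · have h : x ^ q = x ^ ((q-1) + 1) := by norm_num
    rw [h, ENNReal.rpow_add (q-1) 1 hx0 hx, ENNReal.rpow_one]

/-- The strong (q,q) inequality for the uncentered HL maximal operator. -/
lemma strong_qq (hn : 0 < n) {q : ℝ} (hq : 1 < q) (f : (Fin n → ℝ) → ℂ)
    (hf : Measurable f) :
    ∫⁻ x, hlMaximal n f x ^ q ≤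
      2 * ENNReal.ofReal q * ENNReal.ofReal ((5 * Real.sqrt n) ^ n) *
        ENNReal.ofReal ((2:ℝ) ^ (q-1) / (q-1)) * ∫⁻ x, (‖f x‖₊ : ℝ≥0∞) ^ q := by
  set K := ENNReal.ofReal ((5 * Real.sqrt n) ^ n) with hK
  set S : ℝ → Set (Fin n → ℝ) := fun t => {y | ENNReal.ofReal (t/2) < (‖f y‖₊ : ℝ≥0∞)}
    with hS
  set ft : ℝ → (Fin n → ℝ) → ℂ := fun t => (S t).indicator f with hft
  have hnorm_ft : ∀ t y, (‖ft t y‖₊ : ℝ≥0∞) =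
      (S t).indicator (fun y => (‖f y‖₊ : ℝ≥0∞)) y := by
    intro t y
    by_cases hy : y ∈ S t
    · rw [hft]; simp only [indicator_of_mem hy]
    · rw [hft]; simp only [indicator_of_notMem hy]; simp
  have hptwise : ∀ t y, (‖f y‖₊ : ℝ≥0∞) ≤ (‖ft t y‖₊ : ℝ≥0∞) + ENNReal.ofReal (t/2) := by
    intro t y
    by_cases hy : y ∈ S t
    · rw [hft]; simp only [indicator_of_mem hy]; exact le_self_add
    · rw [hft]; simp only [indicator_of_notMem hy]
      have : (‖f y‖₊ : ℝ≥0∞) ≤ ENNReal.ofReal (t/2) := not_lt.1 hy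
      simpa using this
  rw [layercake volume (measurable_hlMaximal f) hq]
  have hbound : ∀ t ∈ Ioi (0:ℝ),
      ENNReal.ofReal (q * t ^ (q-1)) * volume {x | ENNReal.ofReal t < hlMaximal n f x} ≤
      (2 * ENNReal.ofReal q * K) *
        (ENNReal.ofReal (t ^ (q-2)) *
          ∫⁻ y, (S t).indicator (fun y => (‖f y‖₊ : ℝ≥0∞)) y) := by
    intro t ht
    rw [mem_Ioi] at ht
    have hsubset : {x | ENNReal.ofReal t < hlMaximal n f x} ⊆
        {x | ENNReal.ofReal (t/2) < hlMaximal n (ft t) x} := by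
      intro x hx
      rw [mem_setOf_eq] at hx ⊢
      have h1 : hlMaximal n f x ≤ hlMaximal n (ft t) x + ENNReal.ofReal (t/2) :=
        hlMaximal_le_add hn f (ft t) _ (hptwise t) x
      have h2 : ENNReal.ofReal (t/2) + ENNReal.ofReal (t/2) <
          hlMaximal n (ft t) x + ENNReal.ofReal (t/2) := by
        calc ENNReal.ofReal (t/2) + ENNReal.ofReal (t/2) = ENNReal.ofReal t := by
              rw [← ENNReal.ofReal_add (by linarith) (by linarith)]
              norm_num
        _ < hlMaximal n f x := hx
        _ ≤ _ := h1
      exact (ENNReal.add_lt_add_iff_right ENNReal.ofReal_ne_top).1 h2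
    have hw := weak11 hn (ft t) (by linarith : (0:ℝ) < t/2)
    have hwint : (∫⁻ y, (‖ft t y‖₊ : ℝ≥0∞)) =
        ∫⁻ y, (S t).indicator (fun y => (‖f y‖₊ : ℝ≥0∞)) y :=
      lintegral_congr fun y => hnorm_ft t y
    rw [hwint] at hw
    have hco : ENNReal.ofReal (q * t ^ (q-1)) =
        (2 * ENNReal.ofReal q * ENNReal.ofReal (t ^ (q-2))) * ENNReal.ofReal (t/2) := by
      have hrw : (2 * ENNReal.ofReal q * ENNReal.ofReal (t ^ (q-2))) * ENNReal.ofReal (t/2)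
          = (ENNReal.ofReal q * ENNReal.ofReal (t^(q-2))) * (2 * ENNReal.ofReal (t/2)) := by
        ring
      rw [hrw, two_mul_ofReal_half, ← ENNReal.ofReal_mul (by linarith),
        ← ENNReal.ofReal_mul (by positivity)]
      congr 1
      rw [show q - 1 = (q-2) + 1 by ring, Real.rpow_add ht, Real.rpow_one]
      ring
    calc ENNReal.ofReal (q * t ^ (q-1)) * volume {x | ENNReal.ofReal t < hlMaximal n f x}
        = (2 * ENNReal.ofReal q * ENNReal.ofReal (t ^ (q-2))) *
            (ENNReal.ofReal (t/2) * volume {x | ENNReal.ofReal t < hlMaximal n f x}) := by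
          rw [hco]; ring
    _ ≤ (2 * ENNReal.ofReal q * ENNReal.ofReal (t ^ (q-2))) *
            (ENNReal.ofReal (t/2) *
              volume {x | ENNReal.ofReal (t/2) < hlMaximal n (ft t) x}) :=
          mul_le_mul_right (mul_le_mul_right (measure_mono hsubset) _) _
    _ ≤ (2 * ENNReal.ofReal q * ENNReal.ofReal (t ^ (q-2))) *
            (K * ∫⁻ y, (S t).indicator (fun y => (‖f y‖₊ : ℝ≥0∞)) y) :=
          mul_le_mul_right hw _
    _ = (2 * ENNReal.ofReal q * K) *
          (ENNReal.ofReal (t ^ (q-2)) *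
            ∫⁻ y, (S t).indicator (fun y => (‖f y‖₊ : ℝ≥0∞)) y) := by ring
  calc ∫⁻ t in Ioi (0:ℝ),
        ENNReal.ofReal (q * t ^ (q-1)) * volume {x | ENNReal.ofReal t < hlMaximal n f x}
      ≤ ∫⁻ t in Ioi (0:ℝ), (2 * ENNReal.ofReal q * K) *
          (ENNReal.ofReal (t ^ (q-2)) *
            ∫⁻ y, (S t).indicator (fun y => (‖f y‖₊ : ℝ≥0∞)) y) :=
        setLIntegral_mono' measurableSet_Ioi hbound
  _ = (2 * ENNReal.ofReal q * K) * ∫⁻ t in Ioi (0:ℝ),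
        (ENNReal.ofReal (t ^ (q-2)) *
          ∫⁻ y, (S t).indicator (fun y => (‖f y‖₊ : ℝ≥0∞)) y) := by
      rw [lintegral_const_mul' _ _ (by finiteness)]
  _ = (2 * ENNReal.ofReal q * K) * ∫⁻ t in Ioi (0:ℝ), (∫⁻ y,
        ENNReal.ofReal (t ^ (q-2)) * (S t).indicator (fun y => (‖f y‖₊ : ℝ≥0∞)) y) := by
      congr 1
      apply lintegral_congr
      intro t
      rw [lintegral_const_mul' _ _ ENNReal.ofReal_ne_top]
  _ = (2 * ENNReal.ofReal q * K) * ∫⁻ y, (∫⁻ t in Ioi (0:ℝ),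
        ENNReal.ofReal (t ^ (q-2)) * (S t).indicator (fun y => (‖f y‖₊ : ℝ≥0∞)) y) := by
      congr 1
      apply lintegral_lintegral_swap
      have hS' : MeasurableSet {p : ℝ × (Fin n → ℝ) |
          ENNReal.ofReal (p.1/2) < (‖f p.2‖₊ : ℝ≥0∞)} :=
        measurableSet_lt ((ENNReal.measurable_ofReal).comp
          ((measurable_fst).div_const 2)) (hf.nnnorm.coe_nnreal_ennreal.comp measurable_snd)
      have heq : (Function.uncurry fun t y =>
          ENNReal.ofReal (t ^ (q-2)) * (S t).indicator (fun y => (‖f y‖₊ : ℝ≥0∞)) y) =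
          {p : ℝ × (Fin n → ℝ) | ENNReal.ofReal (p.1/2) < (‖f p.2‖₊ : ℝ≥0∞)}.indicator
            (fun p => ENNReal.ofReal (p.1 ^ (q-2)) * (‖f p.2‖₊ : ℝ≥0∞)) := by
        ext ⟨t, y⟩
        simp only [Function.uncurry, Set.indicator, hS, mem_setOf_eq]
        by_cases hy : ENNReal.ofReal (t/2) < (‖f y‖₊ : ℝ≥0∞)
        · simp [hy]
        · simp [hy]
      rw [heq]
      apply Measurable.aemeasurable
      apply Measurable.indicator _ hS'
      exact ((measurable_fst.pow_const (q-2)).ennreal_ofReal).mul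
        (hf.nnnorm.coe_nnreal_ennreal.comp measurable_snd)
  _ = (2 * ENNReal.ofReal q * K) *
        ∫⁻ y, ENNReal.ofReal ((2:ℝ)^(q-1)/(q-1)) * (‖f y‖₊ : ℝ≥0∞) ^ q := by
      congr 1
      apply lintegral_congr
      intro y
      set a : ℝ≥0∞ := 2 * (‖f y‖₊ : ℝ≥0∞) with ha
      have hat : a ≠ ∞ := by finiteness
      have hsetrw : (fun t => ENNReal.ofReal (t ^ (q-2)) *
          (S t).indicator (fun y => (‖f y‖₊ : ℝ≥0∞)) y) =
          (fun t => ({t : ℝ | ENNReal.ofReal t < a}.indicator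
            (fun t => ENNReal.ofReal (t ^ (q-2)))) t * (‖f y‖₊ : ℝ≥0∞)) := by
        ext t
        have hiff : (y ∈ S t) ↔ ENNReal.ofReal t < a := by
          rw [hS, mem_setOf_eq, ha, ← two_mul_ofReal_half t,
            ENNReal.mul_lt_mul_iff_right (by norm_num) (by norm_num)]
        by_cases hy : y ∈ S t
        · rw [Set.indicator_of_mem hy, Set.indicator_of_mem
            (show t ∈ {t : ℝ | ENNReal.ofReal t < a} from hiff.1 hy)]
        · rw [Set.indicator_of_notMem hy, Set.indicator_of_notMem
            (show t ∉ {t : ℝ | ENNReal.ofReal t < a} from fun h => hy (hiff.2 h))]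
          simp
      rw [hsetrw, lintegral_mul_const' _ _ (by finiteness), ptwise_finite (by linarith) a hat]
      have htr : a.toReal = 2 * ‖f y‖ := by
        rw [ha, ENNReal.toReal_mul, ENNReal.coe_toReal, coe_nnnorm]
        norm_num
      rw [htr, show q - 2 + 1 = q - 1 by ring]
      have hmulpow : (2 * ‖f y‖) ^ (q-1) = (2:ℝ)^(q-1) * ‖f y‖^(q-1) :=
        Real.mul_rpow (by norm_num) (norm_nonneg _)
      rw [hmulpow, show (2:ℝ)^(q-1) * ‖f y‖^(q-1) / (q-1) =
        ((2:ℝ)^(q-1)/(q-1)) * ‖f y‖^(q-1) by ring]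
      have hq1pos : (0:ℝ) < q - 1 := by linarith
      rw [ENNReal.ofReal_mul (by positivity), ← ENNReal.ofReal_rpow_of_nonneg
        (norm_nonneg _) (by linarith), ofReal_norm, enorm_eq_nnnorm]
      rw [mul_assoc, mul_rpow_sub_one hq _ ENNReal.coe_ne_top]
  _ = 2 * ENNReal.ofReal q * K * ENNReal.ofReal ((2:ℝ)^(q-1)/(q-1)) *
        ∫⁻ x, (‖f x‖₊ : ℝ≥0∞) ^ q := by
      rw [lintegral_const_mul' _ _ ENNReal.ofReal_ne_top]
      ring





/-- Hölder: average bound. -/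
lemma lintegral_le_rpow_mul {q : ℝ} (hq : 1 < q) (s : Set (Fin n → ℝ))
    (F : (Fin n → ℝ) → ℝ≥0∞) (hF : AEMeasurable F (volume.restrict s)) :
    ∫⁻ y in s, F y ≤ (∫⁻ y in s, F y ^ q) ^ (1/q) * (volume s) ^ (1 - 1/q) := by
  have hpq : q.HolderConjugate (Real.conjExponent q) := Real.HolderConjugate.conjExponent hq
  have h := ENNReal.lintegral_mul_le_Lp_mul_Lq (volume.restrict s) hpq hF
    aemeasurable_const (g := fun _ => (1:ℝ≥0∞))
  simp only [mul_one, ENNReal.one_rpow] at h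
  calc ∫⁻ y in s, F y ≤ (∫⁻ y in s, F y ^ q) ^ (1/q) *
        (∫⁻ _ in s, (1:ℝ≥0∞)) ^ (1 / Real.conjExponent q) := by
        simpa using h
  _ = (∫⁻ y in s, F y ^ q) ^ (1/q) * (volume s) ^ (1 - 1/q) := by
      rw [setLIntegral_one]
      congr 1
      rw [Real.conjExponent, one_div, inv_div]
      rw [sub_div, div_self (by linarith : q ≠ 0), one_div]

/-- The defining inequality of the Morrey norm. -/
lemma cube_le_morreyNorm {q : ℝ} (φ : ℝ → ℝ) (f : (Fin n → ℝ) → ℂ)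
    (x : Fin n → ℝ) {r : ℝ} (hr : 0 < r) :
    ENNReal.ofReal (φ r) *
      ((volume (Metric.closedBall x r))⁻¹ *
        ∫⁻ y in Metric.closedBall x r, (‖f y‖₊ : ℝ≥0∞) ^ q) ^ (1 / q) ≤
      morreyNorm n q φ f := by
  refine le_trans ?_ (le_iSup _ x)
  refine le_trans ?_ (le_iSup _ r)
  exact le_iSup (fun _ : 0 < r => ENNReal.ofReal (φ r) *
      ((volume (Metric.closedBall x r))⁻¹ *
        ∫⁻ y in Metric.closedBall x r, (‖f y‖₊ : ℝ≥0∞) ^ q) ^ (1 / q)) hr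

lemma avg_rpow_le {q : ℝ} (φ : ℝ → ℝ) (f : (Fin n → ℝ) → ℂ)
    (x : Fin n → ℝ) {r : ℝ} (hr : 0 < r) (hφ : 0 < φ r) :
    ((volume (Metric.closedBall x r))⁻¹ *
        ∫⁻ y in Metric.closedBall x r, (‖f y‖₊ : ℝ≥0∞) ^ q) ^ (1 / q) ≤
      (ENNReal.ofReal (φ r))⁻¹ * morreyNorm n q φ f := by
  have h := cube_le_morreyNorm (q := q) φ f x hr
  have hc0 : ENNReal.ofReal (φ r) ≠ 0 := by simp [hφ]
  have hct : ENNReal.ofReal (φ r) ≠ ∞ := ENNReal.ofReal_ne_top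
  calc ((volume (Metric.closedBall x r))⁻¹ *
        ∫⁻ y in Metric.closedBall x r, (‖f y‖₊ : ℝ≥0∞) ^ q) ^ (1 / q)
      = (ENNReal.ofReal (φ r))⁻¹ * (ENNReal.ofReal (φ r) *
        ((volume (Metric.closedBall x r))⁻¹ *
          ∫⁻ y in Metric.closedBall x r, (‖f y‖₊ : ℝ≥0∞) ^ q) ^ (1 / q)) := by
        rw [← mul_assoc, ENNReal.inv_mul_cancel hc0 hct, one_mul]
  _ ≤ (ENNReal.ofReal (φ r))⁻¹ * morreyNorm n q φ f := mul_le_mul_right h _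





/-- The overall constant (as an `ℝ≥0∞`). -/
noncomputable def CE (n : ℕ) (q : ℝ) : ℝ≥0∞ :=
  (2 * ENNReal.ofReal q * ENNReal.ofReal ((5 * Real.sqrt n) ^ n) *
    ENNReal.ofReal ((2:ℝ) ^ (q-1) / (q-1)) * ENNReal.ofReal ((3:ℝ) ^ n)) ^ (1/q) +
  ENNReal.ofReal ((Real.sqrt n) ^ n)

lemma CE_ne_top {q : ℝ} (hq : 0 < q) : CE n q ≠ ∞ := by
  rw [CE]
  apply ENNReal.add_ne_top.2
  constructor
  · apply ENNReal.rpow_ne_top_of_nonneg (by positivity)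
    finiteness
  · exact ENNReal.ofReal_ne_top

/-- Far balls: radius `> r` gives a uniform bound. -/
lemma far_ball_bound (hn : 0 < n) {q : ℝ} (hq : 1 < q) (φ : ℝ → ℝ)
    (hφpos : ∀ t, 0 < t → 0 < φ t) (hφmono : ∀ s t, 0 < s → s ≤ t → φ s ≤ φ t)
    (f : (Fin n → ℝ) → ℂ) (hf : Measurable f) {r : ℝ} (hr : 0 < r)
    (c : Fin n → ℝ) {ρ : ℝ} (hρr : r < ρ) :
    (volume (euclBall n c ρ))⁻¹ * ∫⁻ y in euclBall n c ρ, (‖f y‖₊ : ℝ≥0∞) ≤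
      ENNReal.ofReal ((Real.sqrt n) ^ n) * ((ENNReal.ofReal (φ r))⁻¹ * morreyNorm n q φ f) := by
  have hρ0 : 0 < ρ := hr.trans hρr
  have hsn := sqrt_n_pos hn
  set Qc := Metric.closedBall c ρ with hQc
  set vQc := volume Qc with hvQc
  have hvQc_eq : vQc = ENNReal.ofReal ((2 * ρ) ^ n) := by
    rw [hvQc, hQc, Real.volume_pi_closedBall c hρ0.le, Fintype.card_fin]
  have hvQc0 : vQc ≠ 0 := by rw [hvQc_eq]; simp; positivity
  have hvQct : vQc ≠ ∞ := by rw [hvQc_eq]; exact ENNReal.ofReal_ne_top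
  set v := volume (euclBall n c ρ) with hv
  have hAvg : (vQc⁻¹ * ∫⁻ y in Qc, (‖f y‖₊ : ℝ≥0∞) ^ q) ^ (1/q) ≤
      (ENNReal.ofReal (φ ρ))⁻¹ * morreyNorm n q φ f :=
    avg_rpow_le φ f c hρ0 (hφpos ρ hρ0)
  have hHolder : ∫⁻ y in Qc, (‖f y‖₊ : ℝ≥0∞) ≤
      vQc * (vQc⁻¹ * ∫⁻ y in Qc, (‖f y‖₊ : ℝ≥0∞) ^ q) ^ (1/q) := by
    set I := ∫⁻ y in Qc, (‖f y‖₊ : ℝ≥0∞) ^ q with hIdef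
    have h1 := lintegral_le_rpow_mul hq Qc (fun y => (‖f y‖₊ : ℝ≥0∞))
      hf.nnnorm.coe_nnreal_ennreal.aemeasurable
    have hsplitv : vQc = vQc ^ (1 - 1/q) * vQc ^ (1/q) := by
      rw [← ENNReal.rpow_add _ _ hvQc0 hvQct, show (1 - 1/q) + 1/q = 1 by ring,
        ENNReal.rpow_one]
    have e1 : (vQc⁻¹ * I) ^ (1/q) = (vQc⁻¹) ^ (1/q) * I ^ (1/q) :=
      ENNReal.mul_rpow_of_nonneg _ _ (by positivity)
    have e2 : vQc ^ (1/q) * (vQc⁻¹) ^ (1/q) = 1 := by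
      rw [← ENNReal.mul_rpow_of_nonneg _ _ (by positivity : (0:ℝ) ≤ 1/q),
        ENNReal.mul_inv_cancel hvQc0 hvQct, ENNReal.one_rpow]
    have h2 : vQc * (vQc⁻¹ * I) ^ (1/q) = I ^ (1/q) * vQc ^ (1 - 1/q) := by
      calc vQc * (vQc⁻¹ * I) ^ (1/q)
          = (vQc ^ (1 - 1/q) * vQc ^ (1/q)) * ((vQc⁻¹) ^ (1/q) * I ^ (1/q)) := by
            rw [← hsplitv, e1]
      _ = vQc ^ (1 - 1/q) * (vQc ^ (1/q) * (vQc⁻¹) ^ (1/q)) * I ^ (1/q) := by ring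
      _ = I ^ (1/q) * vQc ^ (1 - 1/q) := by rw [e2]; ring
    rw [h2]
    exact h1
  have hvol : v⁻¹ * vQc ≤ ENNReal.ofReal ((Real.sqrt n) ^ n) := by
    have hlow := le_volume_euclBall hn c hρ0
    have hinv : v⁻¹ ≤ (ENNReal.ofReal ((2 * (ρ / Real.sqrt n)) ^ n))⁻¹ :=
      ENNReal.inv_le_inv' hlow
    have hsplit : vQc = ENNReal.ofReal ((2 * (ρ / Real.sqrt n)) ^ n) *
        ENNReal.ofReal ((Real.sqrt n) ^ n) := by
      rw [hvQc_eq, ← ENNReal.ofReal_mul (by positivity), ← mul_pow]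
      congr 2
      field_simp
    have h0 : ENNReal.ofReal ((2 * (ρ / Real.sqrt n)) ^ n) ≠ 0 := by
      simp; positivity
    have hT : ENNReal.ofReal ((2 * (ρ / Real.sqrt n)) ^ n) ≠ ∞ := ENNReal.ofReal_ne_top
    calc v⁻¹ * vQc ≤ (ENNReal.ofReal ((2 * (ρ / Real.sqrt n)) ^ n))⁻¹ * vQc :=
          mul_le_mul_left hinv _
    _ = ENNReal.ofReal ((Real.sqrt n) ^ n) := by
        rw [hsplit, ← mul_assoc, ENNReal.inv_mul_cancel h0 hT, one_mul]
  have hmono : (ENNReal.ofReal (φ ρ))⁻¹ ≤ (ENNReal.ofReal (φ r))⁻¹ :=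
    ENNReal.inv_le_inv' (ENNReal.ofReal_le_ofReal (hφmono r ρ hr hρr.le))
  calc v⁻¹ * ∫⁻ y in euclBall n c ρ, (‖f y‖₊ : ℝ≥0∞)
      ≤ v⁻¹ * ∫⁻ y in Qc, (‖f y‖₊ : ℝ≥0∞) :=
        mul_le_mul_right (lintegral_mono_set (euclBall_subset_closedBall c ρ)) _
  _ ≤ v⁻¹ * (vQc * (vQc⁻¹ * ∫⁻ y in Qc, (‖f y‖₊ : ℝ≥0∞) ^ q) ^ (1/q)) :=
        mul_le_mul_right hHolder _
  _ = (v⁻¹ * vQc) * (vQc⁻¹ * ∫⁻ y in Qc, (‖f y‖₊ : ℝ≥0∞) ^ q) ^ (1/q) := by ring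
  _ ≤ ENNReal.ofReal ((Real.sqrt n) ^ n) * ((ENNReal.ofReal (φ ρ))⁻¹ * morreyNorm n q φ f) :=
        mul_le_mul' hvol hAvg
  _ ≤ ENNReal.ofReal ((Real.sqrt n) ^ n) * ((ENNReal.ofReal (φ r))⁻¹ * morreyNorm n q φ f) :=
        mul_le_mul_right (mul_le_mul_left hmono _) _

/-- Near balls are contained in the tripled cube. -/
lemma near_ball_subset (x₀ : Fin n → ℝ) {r : ℝ} {c x : Fin n → ℝ} {ρ : ℝ} (hρr : ρ ≤ r)
    (hxQ : x ∈ Metric.closedBall x₀ r) (hxB : x ∈ euclBall n c ρ) :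
    euclBall n c ρ ⊆ Metric.closedBall x₀ (3 * r) := by
  intro y hy
  rw [Metric.mem_closedBall]
  have h1 : dist y c ≤ dE y c := dist_le_dE y c
  have h2 : dE y c < ρ := mem_euclBall.1 hy
  have h3 : dist x c ≤ dE x c := dist_le_dE x c
  have h4 : dE x c < ρ := mem_euclBall.1 hxB
  have h5 : dist x x₀ ≤ r := Metric.mem_closedBall.1 hxQ
  have h6 : dist c x = dist x c := dist_comm c x
  have := dist_triangle4 y c x x₀
  linarith

/-- The pointwise splitting estimate on the cube. -/
lemma pointwise_split (hn : 0 < n) {q : ℝ} (hq : 1 < q) (φ : ℝ → ℝ)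
    (hφpos : ∀ t, 0 < t → 0 < φ t) (hφmono : ∀ s t, 0 < s → s ≤ t → φ s ≤ φ t)
    (f : (Fin n → ℝ) → ℂ) (hf : Measurable f) (x₀ : Fin n → ℝ) {r : ℝ} (hr : 0 < r)
    {x : Fin n → ℝ} (hxQ : x ∈ Metric.closedBall x₀ r) :
    hlMaximal n f x ≤
      hlMaximal n ((Metric.closedBall x₀ (3 * r)).indicator f) x +
      ENNReal.ofReal ((Real.sqrt n) ^ n) * ((ENNReal.ofReal (φ r))⁻¹ * morreyNorm n q φ f) := by
  apply hlMaximal_le_of_forall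
  intro c ρ hρ hxB
  rcases le_or_gt ρ r with hρr | hρr
  · -- near ball
    have hsub := near_ball_subset x₀ hρr hxQ hxB
    have heq : ∫⁻ y in euclBall n c ρ, (‖f y‖₊ : ℝ≥0∞) =
        ∫⁻ y in euclBall n c ρ,
          (‖(Metric.closedBall x₀ (3 * r)).indicator f y‖₊ : ℝ≥0∞) := by
      apply setLIntegral_congr_fun (measurableSet_euclBall c ρ)
      · intro y hy
        simp only [Set.indicator_of_mem (hsub hy)]
    rw [heq]
    exact le_trans (le_hlMaximal _ hρ hxB) le_self_add
  · -- far ball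
    exact le_trans (far_ball_bound hn hq φ hφpos hφmono f hf hr c hρr) le_add_self





/-- The per-cube estimate. -/
lemma percube (hn : 0 < n) {q : ℝ} (hq : 1 < q) (φ : ℝ → ℝ)
    (hφpos : ∀ t, 0 < t → 0 < φ t) (hφmono : ∀ s t, 0 < s → s ≤ t → φ s ≤ φ t)
    (f : (Fin n → ℝ) → ℂ) (hf : Measurable f) (x₀ : Fin n → ℝ) {r : ℝ} (hr : 0 < r) :
    ENNReal.ofReal (φ r) *
      ((volume (Metric.closedBall x₀ r))⁻¹ *
        ∫⁻ y in Metric.closedBall x₀ r, hlMaximal n f y ^ q) ^ (1/q) ≤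
      CE n q * morreyNorm n q φ f := by
  have hq0 : (0:ℝ) < q := by linarith
  set A := morreyNorm n q φ f with hA
  set c0 := ENNReal.ofReal (φ r) with hc0
  have hc00 : c0 ≠ 0 := by simp [hc0, (hφpos r hr)]
  have hc0t : c0 ≠ ∞ := ENNReal.ofReal_ne_top
  set D := ENNReal.ofReal ((Real.sqrt n) ^ n) * (c0⁻¹ * A) with hD
  set Q := Metric.closedBall x₀ r with hQ
  set Q3 := Metric.closedBall x₀ (3 * r) with hQ3
  set f₁ := Q3.indicator f with hf₁
  have hf₁m : Measurable f₁ := hf.indicator measurableSet_closedBall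
  set g := hlMaximal n f₁ with hg
  set vQ := volume Q with hvQ
  have hvQ_eq : vQ = ENNReal.ofReal ((2 * r) ^ n) := by
    rw [hvQ, hQ, Real.volume_pi_closedBall x₀ hr.le, Fintype.card_fin]
  have hvQ0 : vQ ≠ 0 := by rw [hvQ_eq]; simp; positivity
  have hvQt : vQ ≠ ∞ := by rw [hvQ_eq]; exact ENNReal.ofReal_ne_top
  set vQ3 := volume Q3 with hvQ3
  have hvQ3_eq : vQ3 = ENNReal.ofReal ((3:ℝ)^n) * vQ := by
    rw [hvQ3, hQ3, Real.volume_pi_closedBall x₀ (by linarith), Fintype.card_fin,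
      hvQ_eq, ← ENNReal.ofReal_mul (by positivity)]
    congr 1
    rw [← mul_pow]
    congr 1
    ring
  have hvQ30 : vQ3 ≠ 0 := by
    rw [hvQ3_eq]
    refine mul_ne_zero ?_ hvQ0
    simp only [ne_eq, ENNReal.ofReal_eq_zero, not_le]
    positivity
  have hvQ3t : vQ3 ≠ ∞ := by
    rw [hvQ3_eq]
    exact ENNReal.mul_ne_top ENNReal.ofReal_ne_top hvQt
  set Cq' := 2 * ENNReal.ofReal q * ENNReal.ofReal ((5 * Real.sqrt n) ^ n) *
    ENNReal.ofReal ((2:ℝ) ^ (q-1) / (q-1)) with hCq'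
  -- Step 1: pointwise bound inside the cube
  have step1 : ∫⁻ y in Q, hlMaximal n f y ^ q ≤ ∫⁻ y in Q, (g y + D) ^ q := by
    apply setLIntegral_mono' measurableSet_closedBall
    intro y hy
    exact ENNReal.rpow_le_rpow
      (pointwise_split hn hq φ hφpos hφmono f hf x₀ hr hy) (by positivity)
  -- Step 2: Minkowski
  have step2 : (∫⁻ y in Q, (g y + D) ^ q) ^ (1/q) ≤
      (∫⁻ y in Q, g y ^ q) ^ (1/q) + D * vQ ^ (1/q) := by
    have h := ENNReal.lintegral_Lp_add_le (p := q) (μ := volume.restrict Q)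
      (f := g) (g := fun _ => D)
      (measurable_hlMaximal f₁).aemeasurable aemeasurable_const hq.le
    have hconst : (∫⁻ _ in Q, D ^ q) ^ (1/q) = D * vQ ^ (1/q) := by
      rw [setLIntegral_const, ENNReal.mul_rpow_of_nonneg _ _ (by positivity),
        ← ENNReal.rpow_mul, mul_one_div, div_self (by linarith : q ≠ 0),
        ENNReal.rpow_one]
    calc (∫⁻ y in Q, (g y + D) ^ q) ^ (1/q)
        = (∫⁻ y in Q, ((g + (fun _ => D) : (Fin n → ℝ) → ℝ≥0∞) y) ^ q) ^ (1/q) := rfl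
    _ ≤ (∫⁻ y in Q, g y ^ q) ^ (1/q) + (∫⁻ _ in Q, D ^ q) ^ (1/q) := h
    _ = (∫⁻ y in Q, g y ^ q) ^ (1/q) + D * vQ ^ (1/q) := by rw [hconst]
  -- Step 3: strong (q,q) + Morrey bound on the tripled cube
  have step3 : (∫⁻ y in Q, g y ^ q) ^ (1/q) ≤
      (Cq' * ENNReal.ofReal ((3:ℝ)^n)) ^ (1/q) * vQ ^ (1/q) * (c0⁻¹ * A) := by
    have h1 : ∫⁻ y in Q, g y ^ q ≤ ∫⁻ y, g y ^ q := setLIntegral_le_lintegral _ _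
    have h2 := strong_qq hn hq f₁ hf₁m
    have h3 : ∫⁻ x, (‖f₁ x‖₊ : ℝ≥0∞) ^ q = ∫⁻ y in Q3, (‖f y‖₊ : ℝ≥0∞) ^ q := by
      have hpt : ∀ y, (‖f₁ y‖₊ : ℝ≥0∞) ^ q =
          Q3.indicator (fun y => (‖f y‖₊ : ℝ≥0∞) ^ q) y := by
        intro y
        by_cases hy : y ∈ Q3
        · rw [hf₁]
          simp only [indicator_of_mem hy]
        · rw [hf₁]
          simp only [indicator_of_notMem hy]
          simp [ENNReal.zero_rpow_of_pos hq0]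
      rw [lintegral_congr hpt, lintegral_indicator measurableSet_closedBall]
    have h4 : ∫⁻ y in Q3, (‖f y‖₊ : ℝ≥0∞) ^ q =
        vQ3 * (vQ3⁻¹ * ∫⁻ y in Q3, (‖f y‖₊ : ℝ≥0∞) ^ q) := by
      rw [← mul_assoc, ENNReal.mul_inv_cancel hvQ30 hvQ3t, one_mul]
    have h5 : ∫⁻ y in Q, g y ^ q ≤
        (Cq' * ENNReal.ofReal ((3:ℝ)^n) * vQ) *
          (vQ3⁻¹ * ∫⁻ y in Q3, (‖f y‖₊ : ℝ≥0∞) ^ q) := by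
      calc ∫⁻ y in Q, g y ^ q ≤ ∫⁻ y, g y ^ q := h1
      _ ≤ Cq' * ∫⁻ x, (‖f₁ x‖₊ : ℝ≥0∞) ^ q := h2
      _ = Cq' * (vQ3 * (vQ3⁻¹ * ∫⁻ y in Q3, (‖f y‖₊ : ℝ≥0∞) ^ q)) := by rw [h3, ← h4]
      _ = (Cq' * ENNReal.ofReal ((3:ℝ)^n) * vQ) *
            (vQ3⁻¹ * ∫⁻ y in Q3, (‖f y‖₊ : ℝ≥0∞) ^ q) := by
          rw [hvQ3_eq]; ring
    have h6 : (vQ3⁻¹ * ∫⁻ y in Q3, (‖f y‖₊ : ℝ≥0∞) ^ q) ^ (1/q) ≤ c0⁻¹ * A := by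
      have := avg_rpow_le (q := q) φ f x₀ (by linarith : (0:ℝ) < 3*r)
        (hφpos _ (by linarith))
      refine le_trans this ?_
      exact mul_le_mul_left
        (ENNReal.inv_le_inv' (ENNReal.ofReal_le_ofReal
          (hφmono r (3*r) hr (by linarith)))) _
    calc (∫⁻ y in Q, g y ^ q) ^ (1/q)
        ≤ ((Cq' * ENNReal.ofReal ((3:ℝ)^n) * vQ) *
            (vQ3⁻¹ * ∫⁻ y in Q3, (‖f y‖₊ : ℝ≥0∞) ^ q)) ^ (1/q) :=
          ENNReal.rpow_le_rpow h5 (by positivity)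
    _ = (Cq' * ENNReal.ofReal ((3:ℝ)^n)) ^ (1/q) * vQ ^ (1/q) *
          ((vQ3⁻¹ * ∫⁻ y in Q3, (‖f y‖₊ : ℝ≥0∞) ^ q)) ^ (1/q) := by
        rw [ENNReal.mul_rpow_of_nonneg _ _ (by positivity),
          ENNReal.mul_rpow_of_nonneg _ _ (by positivity : (0:ℝ) ≤ 1/q)]
    _ ≤ (Cq' * ENNReal.ofReal ((3:ℝ)^n)) ^ (1/q) * vQ ^ (1/q) * (c0⁻¹ * A) :=
        mul_le_mul_right h6 _
  -- assemble
  have hinv1 : (vQ⁻¹) ^ (1/q) * vQ ^ (1/q) = 1 := by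
    rw [← ENNReal.mul_rpow_of_nonneg _ _ (by positivity : (0:ℝ) ≤ 1/q),
      ENNReal.inv_mul_cancel hvQ0 hvQt, ENNReal.one_rpow]
  have main : ((vQ)⁻¹ * ∫⁻ y in Q, hlMaximal n f y ^ q) ^ (1/q) ≤
      (Cq' * ENNReal.ofReal ((3:ℝ)^n)) ^ (1/q) * (c0⁻¹ * A) + D := by
    calc ((vQ)⁻¹ * ∫⁻ y in Q, hlMaximal n f y ^ q) ^ (1/q)
        = (vQ⁻¹) ^ (1/q) * (∫⁻ y in Q, hlMaximal n f y ^ q) ^ (1/q) :=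
          ENNReal.mul_rpow_of_nonneg _ _ (by positivity)
    _ ≤ (vQ⁻¹) ^ (1/q) * (∫⁻ y in Q, (g y + D) ^ q) ^ (1/q) :=
          mul_le_mul_right (ENNReal.rpow_le_rpow step1 (by positivity)) _
    _ ≤ (vQ⁻¹) ^ (1/q) * ((∫⁻ y in Q, g y ^ q) ^ (1/q) + D * vQ ^ (1/q)) :=
          mul_le_mul_right step2 _
    _ = (vQ⁻¹) ^ (1/q) * (∫⁻ y in Q, g y ^ q) ^ (1/q) +
          ((vQ⁻¹) ^ (1/q) * vQ ^ (1/q)) * D := by ring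
    _ ≤ (vQ⁻¹) ^ (1/q) *
          ((Cq' * ENNReal.ofReal ((3:ℝ)^n)) ^ (1/q) * vQ ^ (1/q) * (c0⁻¹ * A)) +
          ((vQ⁻¹) ^ (1/q) * vQ ^ (1/q)) * D := by
          exact add_le_add_left (mul_le_mul_right step3 _) _
    _ = (Cq' * ENNReal.ofReal ((3:ℝ)^n)) ^ (1/q) * ((vQ⁻¹) ^ (1/q) * vQ ^ (1/q)) *
          (c0⁻¹ * A) + ((vQ⁻¹) ^ (1/q) * vQ ^ (1/q)) * D := by ring
    _ = (Cq' * ENNReal.ofReal ((3:ℝ)^n)) ^ (1/q) * (c0⁻¹ * A) + D := by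
        rw [hinv1, mul_one, one_mul]
  have hcc : c0 * c0⁻¹ = 1 := ENNReal.mul_inv_cancel hc00 hc0t
  calc c0 * ((vQ)⁻¹ * ∫⁻ y in Q, hlMaximal n f y ^ q) ^ (1/q)
      ≤ c0 * ((Cq' * ENNReal.ofReal ((3:ℝ)^n)) ^ (1/q) * (c0⁻¹ * A) + D) :=
        mul_le_mul_right main _
  _ = (Cq' * ENNReal.ofReal ((3:ℝ)^n)) ^ (1/q) * (c0 * c0⁻¹) * A +
        ENNReal.ofReal ((Real.sqrt n) ^ n) * (c0 * c0⁻¹) * A := by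
      rw [hD]; ring
  _ = ((Cq' * ENNReal.ofReal ((3:ℝ)^n)) ^ (1/q) +
        ENNReal.ofReal ((Real.sqrt n) ^ n)) * A := by
      rw [hcc]; ring
  _ = CE n q * A := by rw [CE, hCq']

/-- The Morrey norm bound, `n ≥ 1` case. -/
lemma morreyE_le (hn : 0 < n) {q : ℝ} (hq : 1 < q) (φ : ℝ → ℝ)
    (hφpos : ∀ t, 0 < t → 0 < φ t) (hφmono : ∀ s t, 0 < s → s ≤ t → φ s ≤ φ t)
    (f : (Fin n → ℝ) → ℂ) (hf : Measurable f) :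
    morreyNormE n q φ (hlMaximal n f) ≤ CE n q * morreyNorm n q φ f := by
  rw [morreyNormE]
  refine iSup_le fun x => iSup_le fun r => iSup_le fun hr => ?_
  exact percube hn hq φ hφpos hφmono f hf x hr

/-- The `n = 0` case: the maximal function is just the norm. -/
lemma hlMaximal_zero (f : (Fin 0 → ℝ) → ℂ) (x : Fin 0 → ℝ) :
    hlMaximal 0 f x = (‖f x‖₊ : ℝ≥0∞) := by
  have huniv : ∀ (c : Fin 0 → ℝ) {r : ℝ}, 0 < r → euclBall 0 c r = univ := by
    intro c r hr
    ext y
    simp [euclBall, hr]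
  have hvol : volume (univ : Set (Fin 0 → ℝ)) = 1 := by
    have := Real.volume_pi_closedBall (0 : Fin 0 → ℝ) (le_refl (0:ℝ))
    rw [Fintype.card_fin, pow_zero] at this
    have hball : Metric.closedBall (0 : Fin 0 → ℝ) 0 = univ := by
      ext y
      simp [Metric.mem_closedBall, Subsingleton.elim y 0]
    rw [hball] at this
    simp at this
    simpa using this
  have hint : ∀ (c : Fin 0 → ℝ) {r : ℝ} (hr : 0 < r),
      (volume (euclBall 0 c r))⁻¹ * ∫⁻ y in euclBall 0 c r, (‖f y‖₊ : ℝ≥0∞) =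
        (‖f x‖₊ : ℝ≥0∞) := by
    intro c r hr
    rw [huniv c hr, hvol, Measure.restrict_univ, lintegral_unique, hvol]
    simp only [one_mul, mul_one, inv_one]
    exact congrArg (fun z => ((‖f z‖₊ : ℝ≥0∞))) (Subsingleton.elim _ _)
  apply le_antisymm
  · apply hlMaximal_le_of_forall
    intro c r hr hx
    rw [hint c hr]
  · have hx1 : x ∈ euclBall 0 x 1 := by
      rw [huniv x one_pos]; trivial
    calc (‖f x‖₊ : ℝ≥0∞) =
        (volume (euclBall 0 x 1))⁻¹ * ∫⁻ y in euclBall 0 x 1, (‖f y‖₊ : ℝ≥0∞) :=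
          (hint x one_pos).symm
    _ ≤ hlMaximal 0 f x := le_hlMaximal f one_pos hx1


end MorreyAux

/-- for `1 < q < ∞` there is a constant `C > 0`, depending only
on `n` and `q`, such that for every `φ ∈ G_q` and every measurable `f`,
`‖Mf‖_{M^φ_q} ≤ C ‖f‖_{M^φ_q}`. -/
theorem maximal_bounded_morrey (n : ℕ) (q : ℝ) (hq : 1 < q) :
    ∃ C : ℝ, 0 < C ∧ ∀ φ : ℝ → ℝ, IsGq n q φ →
      ∀ f : (Fin n → ℝ) → ℂ, Measurable f →
        morreyNormE n q φ (hlMaximal n f) ≤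
          ENNReal.ofReal C * morreyNorm n q φ f := by
  have hq0 : (0:ℝ) < q := by linarith
  refine ⟨(MorreyAux.CE n q).toReal + 1, ?_, ?_⟩
  · have := ENNReal.toReal_nonneg (a := MorreyAux.CE n q)
    linarith
  intro φ hφ f hf
  have hCle : MorreyAux.CE n q ≤ ENNReal.ofReal ((MorreyAux.CE n q).toReal + 1) := by
    calc MorreyAux.CE n q = ENNReal.ofReal ((MorreyAux.CE n q).toReal) :=
          (ENNReal.ofReal_toReal (MorreyAux.CE_ne_top hq0)).symm
    _ ≤ ENNReal.ofReal ((MorreyAux.CE n q).toReal + 1) :=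
        ENNReal.ofReal_le_ofReal (by linarith)
  have hone : (1:ℝ≥0∞) ≤ ENNReal.ofReal ((MorreyAux.CE n q).toReal + 1) := by
    rw [show (1:ℝ≥0∞) = ENNReal.ofReal 1 by simp]
    apply ENNReal.ofReal_le_ofReal
    have := ENNReal.toReal_nonneg (a := MorreyAux.CE n q)
    linarith
  rcases Nat.eq_zero_or_pos n with hn0 | hn
  · subst hn0
    have heq : morreyNormE 0 q φ (hlMaximal 0 f) = morreyNorm 0 q φ f := by
      have h1 : hlMaximal 0 f = fun y => (‖f y‖₊ : ℝ≥0∞) :=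
        funext fun y => MorreyAux.hlMaximal_zero f y
      rw [h1]
      rfl
    rw [heq]
    calc morreyNorm 0 q φ f = 1 * morreyNorm 0 q φ f := (one_mul _).symm
    _ ≤ ENNReal.ofReal ((MorreyAux.CE 0 q).toReal + 1) * morreyNorm 0 q φ f :=
        mul_le_mul_left hone _
  · calc morreyNormE n q φ (hlMaximal n f) ≤ MorreyAux.CE n q * morreyNorm n q φ f :=
        MorreyAux.morreyE_le hn hq φ hφ.1 hφ.2.1 f hf
    _ ≤ ENNReal.ofReal ((MorreyAux.CE n q).toReal + 1) * morreyNorm n q φ f :=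
        mul_le_mul_left hCle _
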